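/- Let θ be a nonempty horizontal strip, let θ̂ be the diagram obtained from θ by removing its top row, and set a = |θ| - |θ̂|. If θ̂ ≠ ∅, then for every integer p ≥ 1 one has A(θ,p) = A(θ̂, p-a) - A(θ̂, p-a+1). -/

import Mathlib

/-- The south-east corners of a finite set of boxes: boxes `(i,j)` such that
neither `(i+1,j)` nor `(i,j+1)` belongs to the set. -/
def seCorners (θ : Finset (ℤ × ℤ)) : Finset (ℤ × ℤ) :=
  θ.filter fun b => (b.1 + 1, b.2) ∉ θ ∧ (b.1, b.2 + 1) ∉ θ

/-- `c(θ)`: the number of nonempty columns of `θ`. -/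
def colCount (θ : Finset (ℤ × ℤ)) : ℕ := (θ.image Prod.snd).card

/-- `χ(φ,p) = 1` if `p ≤ c(φ)` and `0` otherwise. -/
def chi (φ : Finset (ℤ × ℤ)) (p : ℤ) : ℤ := if p ≤ (colCount φ : ℤ) then 1 else 0

/-- `A(θ,p) = Σ_S (-1)^{|S|} χ(θ∖S, p)`, the sum over subsets `S` of the set of
south-east corners of `θ`. -/
def Acoef (θ : Finset (ℤ × ℤ)) (p : ℤ) : ℤ :=
  ∑ S ∈ (seCorners θ).powerset, (-1) ^ S.card * chi (θ \ S) p

/-- A partition in the `m × k` rectangle: a weakly decreasing sequence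
`λ_1 ≥ … ≥ λ_m ≥ 0` of integers with `λ_1 ≤ k` (indexed by `1,…,m`). -/
def IsRectPartition (m k : ℕ) (lam : ℤ → ℤ) : Prop :=
  (∀ i j : ℤ, 1 ≤ i → i ≤ j → j ≤ (m : ℤ) → lam j ≤ lam i) ∧
  (∀ i : ℤ, 1 ≤ i → i ≤ (m : ℤ) → 0 ≤ lam i) ∧ lam 1 ≤ (k : ℤ)

/-- The Young diagram `{(i,j) : 1 ≤ i ≤ m, 1 ≤ j ≤ λ_i}` of a partition in the
`m × k` rectangle. -/
noncomputable def youngD (m k : ℕ) (lam : ℤ → ℤ) : Finset (ℤ × ℤ) :=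
  (Finset.Icc (1 : ℤ) (m : ℤ) ×ˢ Finset.Icc (1 : ℤ) (k : ℤ)).filter fun b => b.2 ≤ lam b.1

/-- `θ` is a skew diagram in the `m × k` rectangle: `θ = ν/λ` for partitions
`λ ⊆ ν` in the `m × k` rectangle. -/
def IsSkewDiagram (m k : ℕ) (θ : Finset (ℤ × ℤ)) : Prop :=
  ∃ lam nu : ℤ → ℤ, IsRectPartition m k lam ∧ IsRectPartition m k nu ∧
    (∀ i : ℤ, 1 ≤ i → i ≤ (m : ℤ) → lam i ≤ nu i) ∧
    θ = youngD m k nu \ youngD m k lam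

/-- A horizontal strip contains at most one box in each column. -/
def IsHorizontalStrip (θ : Finset (ℤ × ℤ)) : Prop :=
  ∀ b ∈ θ, ∀ b' ∈ θ, b.2 = b'.2 → b.1 = b'.1



open Finset

/-- Auxiliary closed form: `(-1)^t * C(c-1, t)` for `t ≥ 0`, else `0`. -/
def Fval (c : ℕ) (t : ℤ) : ℤ :=
  if 0 ≤ t then (-1) ^ t.toNat * ((c - 1).choose t.toNat : ℤ) else 0

lemma partial_alt_sum (c : ℕ) (hc : 1 ≤ c) (T : ℕ) :
    ∑ j ∈ Finset.range (T + 1), (-1 : ℤ) ^ j * (c.choose j : ℤ)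
      = (-1) ^ T * ((c - 1).choose T : ℤ) := by
  induction T with
  | zero => simp
  | succ T ih =>
    rw [Finset.sum_range_succ, ih]
    obtain ⟨d, rfl⟩ : ∃ d, c = d + 1 := ⟨c - 1, by omega⟩
    simp only [Nat.add_sub_cancel, Nat.choose_succ_succ]
    push_cast
    ring

lemma psum_eq_Fval (c : ℕ) (hc : 1 ≤ c) (t : ℤ) :
    ∑ j ∈ Finset.range (c + 1),
        (-1 : ℤ) ^ j * (c.choose j : ℤ) * (if (j : ℤ) ≤ t then 1 else 0)
      = Fval c t := by
  unfold Fval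
  by_cases ht : 0 ≤ t
  · rw [if_pos ht]
    set T := t.toNat with hT
    have hTt : (T : ℤ) = t := Int.toNat_of_nonneg ht
    have h1 : ∑ j ∈ Finset.range (c + 1),
        (-1 : ℤ) ^ j * (c.choose j : ℤ) * (if (j : ℤ) ≤ t then 1 else 0)
        = ∑ j ∈ Finset.range (max c T + 1),
        (-1 : ℤ) ^ j * (c.choose j : ℤ) * (if (j : ℤ) ≤ t then 1 else 0) := by
      apply Finset.sum_subset
      · exact Finset.range_subset_range.2 (by omega)
      · intro j hj hj'
        have : c < j := by simp only [Finset.mem_range] at hj hj'; omega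
        rw [Nat.choose_eq_zero_of_lt this]
        simp
    have h2 : ∑ j ∈ Finset.range (max c T + 1),
        (-1 : ℤ) ^ j * (c.choose j : ℤ) * (if (j : ℤ) ≤ t then 1 else 0)
        = ∑ j ∈ Finset.range (T + 1),
        (-1 : ℤ) ^ j * (c.choose j : ℤ) * (if (j : ℤ) ≤ t then 1 else 0) := by
      symm
      apply Finset.sum_subset
      · exact Finset.range_subset_range.2 (by omega)
      · intro j hj hj'
        have : T < j := by simp only [Finset.mem_range] at hj hj'; omega
        rw [if_neg (by omega)]
        ring
    rw [h1, h2, ← partial_alt_sum c hc T]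
    apply Finset.sum_congr rfl
    intro j hj
    rw [Finset.mem_range] at hj
    rw [if_pos (by omega)]
    ring
  · rw [if_neg ht]
    apply Finset.sum_eq_zero
    intro j _
    rw [if_neg (by omega)]
    ring

lemma Fval_pascal (c : ℕ) (hc : 1 ≤ c) (t : ℤ) :
    Fval (c + 1) t = Fval c t - Fval c (t - 1) := by
  obtain ⟨d, rfl⟩ : ∃ d, c = d + 1 := ⟨c - 1, by omega⟩
  unfold Fval
  rcases lt_trichotomy t 0 with h | h | h
  · rw [if_neg (by omega), if_neg (by omega), if_neg (by omega)]; ring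
  · subst h
    norm_num
  · rw [if_pos (by omega), if_pos (by omega), if_pos (by omega)]
    have h1 : t.toNat = (t - 1).toNat + 1 := by omega
    rw [h1]
    simp only [Nat.add_sub_cancel, Nat.choose_succ_succ]
    push_cast
    ring


lemma seCorners_subset (θ : Finset (ℤ × ℤ)) : seCorners θ ⊆ θ :=
  Finset.filter_subset _ _

lemma strip_corners_nonempty (φ : Finset (ℤ × ℤ)) (hst : IsHorizontalStrip φ)
    (hne : φ.Nonempty) : (seCorners φ).Nonempty := by
  obtain ⟨b, hb, hmax⟩ := Finset.exists_max_image φ Prod.snd hne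
  refine ⟨b, ?_⟩
  simp only [seCorners, Finset.mem_filter]
  refine ⟨hb, ?_, ?_⟩
  · intro h
    have := hst b hb (b.1 + 1, b.2) h rfl
    simp at this
  · intro h
    have := hmax _ h
    simp at this

lemma colCount_of_strip_subset (θ φ : Finset (ℤ × ℤ)) (hst : IsHorizontalStrip θ)
    (hsub : φ ⊆ θ) : colCount φ = φ.card := by
  unfold colCount
  apply Finset.card_image_of_injOn
  intro b hb b' hb' h
  exact Prod.ext (hst b (hsub hb) b' (hsub hb') h) h

lemma Acoef_strip (φ : Finset (ℤ × ℤ)) (hst : IsHorizontalStrip φ)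
    (hne : φ.Nonempty) (q : ℤ) :
    Acoef φ q = Fval (seCorners φ).card ((φ.card : ℤ) - q) := by
  have hC1 : 1 ≤ (seCorners φ).card := (strip_corners_nonempty φ hst hne).card_pos
  have hCsub : seCorners φ ⊆ φ := seCorners_subset φ
  have hCn : (seCorners φ).card ≤ φ.card := Finset.card_le_card hCsub
  have hchi : ∀ S ∈ (seCorners φ).powerset,
      (-1 : ℤ) ^ S.card * chi (φ \ S) q
        = (-1 : ℤ) ^ S.card * (if q ≤ (φ.card : ℤ) - (S.card : ℤ) then 1 else 0) := by
    intro S hS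
    rw [Finset.mem_powerset] at hS
    have hSθ : S ⊆ φ := hS.trans hCsub
    have hcol : colCount (φ \ S) = φ.card - S.card := by
      rw [colCount_of_strip_subset φ _ hst Finset.sdiff_subset, Finset.card_sdiff_of_subset hSθ]
    have hcard : S.card ≤ φ.card := Finset.card_le_card hSθ
    unfold chi
    rw [hcol]
    congr 1
    have : ((φ.card - S.card : ℕ) : ℤ) = (φ.card : ℤ) - (S.card : ℤ) := by
      push_cast [Nat.cast_sub hcard]; ring
    rw [this]
  unfold Acoef
  rw [Finset.sum_congr rfl hchi]
  rw [Finset.sum_powerset_apply_card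
    (fun n : ℕ => (-1 : ℤ) ^ n * (if q ≤ (φ.card : ℤ) - (n : ℤ) then 1 else 0))]
  rw [← psum_eq_Fval (seCorners φ).card hC1 ((φ.card : ℤ) - q)]
  apply Finset.sum_congr rfl
  intro j _
  rw [nsmul_eq_mul]
  have : (q ≤ (φ.card : ℤ) - (j : ℤ)) ↔ ((j : ℤ) ≤ (φ.card : ℤ) - q) := by omega
  rw [if_congr this rfl rfl]
  ring

/-- Let `θ` be a nonempty horizontal strip, let `θ̂` be obtained from `θ` by
removing its top row (the row of smallest index), and set `a = |θ| - |θ̂|`.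
If `θ̂ ≠ ∅`, then for every integer `p ≥ 1`,
`A(θ,p) = A(θ̂, p-a) - A(θ̂, p-a+1)`. -/
theorem Acoef_remove_top_row (m k : ℕ) (hm : 0 < m) (hk : 0 < k)
    (θ : Finset (ℤ × ℤ)) (hθ : IsSkewDiagram m k θ) (hhs : IsHorizontalStrip θ)
    (hne : θ.Nonempty)
    (r : ℤ) (hr : ∃ b ∈ θ, b.1 = r) (hrmin : ∀ b ∈ θ, r ≤ b.1)
    (θhat : Finset (ℤ × ℤ)) (hθhat : θhat = θ.filter fun b => b.1 ≠ r)
    (hhatne : θhat.Nonempty)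
    (a : ℤ) (ha : a = (θ.card : ℤ) - (θhat.card : ℤ))
    (p : ℤ) (hp : 1 ≤ p) :
    Acoef θ p = Acoef θhat (p - a) - Acoef θhat (p - a + 1) := by
  have hmemhat : ∀ b : ℤ × ℤ, b ∈ θhat ↔ b ∈ θ ∧ b.1 ≠ r := by
    intro b; rw [hθhat]; simp [Finset.mem_filter]
  have hsub : θhat ⊆ θ := fun b hb => ((hmemhat b).1 hb).1
  have hhs' : IsHorizontalStrip θhat := fun b hb b' hb' h =>
    hhs b (hsub hb) b' (hsub hb') h
  -- no box directly below a box of a strip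
  have hnobelow : ∀ b : ℤ × ℤ, b ∈ θ → (b.1 + 1, b.2) ∉ θ := by
    intro b hb h
    have := hhs b hb (b.1 + 1, b.2) h rfl
    simp at this
  -- betweenness in a row (from the skew diagram structure)
  have hbetween : ∀ i j j' j'' : ℤ, (i, j) ∈ θ → (i, j') ∈ θ →
      j ≤ j'' → j'' ≤ j' → (i, j'') ∈ θ := by
    obtain ⟨lam, nu, _, _, _, hθeq⟩ := hθ
    intro i j j' j'' h1 h2 hle1 hle2
    rw [hθeq] at h1 h2 ⊢
    simp only [youngD, Finset.mem_sdiff, Finset.mem_filter, Finset.mem_product,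
      Finset.mem_Icc, not_and, not_le] at h1 h2 ⊢
    omega
  -- pick the rightmost box of the top row
  obtain ⟨b0, hb0, hb0r⟩ := hr
  have htopne : (θ.filter fun b => b.1 = r).Nonempty :=
    ⟨b0, Finset.mem_filter.2 ⟨hb0, hb0r⟩⟩
  obtain ⟨bm, hbm, hbmmax⟩ := Finset.exists_max_image _ Prod.snd htopne
  rw [Finset.mem_filter] at hbm
  obtain ⟨hbmθ, hbmr⟩ := hbm
  -- seCorners θ = insert bm (seCorners θhat)
  have hkey : seCorners θ = insert bm (seCorners θhat) := by
    ext b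
    simp only [seCorners, Finset.mem_filter, Finset.mem_insert]
    constructor
    · rintro ⟨hbθ, hdown, hright⟩
      by_cases hbr : b.1 = r
      · left
        -- b is in the top row; show b = bm
        have hble : b.2 ≤ bm.2 := hbmmax b (Finset.mem_filter.2 ⟨hbθ, hbr⟩)
        rcases eq_or_lt_of_le hble with heq | hlt
        · exact Prod.ext (hbr.trans hbmr.symm) heq
        · exfalso
          apply hright
          have : (b.1, b.2 + 1) = (r, b.2 + 1) := by rw [hbr]
          rw [this]
          have hb' : (r, b.2) ∈ θ := by rw [← hbr]; exact hbθ
          have hbm' : (r, bm.2) ∈ θ := by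
            have : bm = (r, bm.2) := Prod.ext hbmr rfl
            rw [← this]; exact hbmθ
          exact hbetween r b.2 bm.2 (b.2 + 1) hb' hbm' (by omega) (by omega)
      · right
        refine ⟨(hmemhat b).2 ⟨hbθ, hbr⟩, ?_, ?_⟩
        · intro h
          exact hdown ((hmemhat _).1 h).1
        · intro h
          exact hright ((hmemhat _).1 h).1
    · rintro (heq | ⟨hbh, hdown, hright⟩)
      · subst heq
        refine ⟨hbmθ, hnobelow b hbmθ, ?_⟩
        intro h
        have hrow : (b.1, b.2 + 1).1 = r := hbmr
        have := hbmmax _ (Finset.mem_filter.2 ⟨h, hrow⟩)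
        simp at this
      · obtain ⟨hbθ, hbr⟩ := (hmemhat b).1 hbh
        refine ⟨hbθ, hnobelow b hbθ, ?_⟩
        intro h
        exact hright ((hmemhat _).2 ⟨h, hbr⟩)
  have hbmnot : bm ∉ seCorners θhat := by
    intro h
    have : bm ∈ θhat := Finset.mem_filter.1 h |>.1
    exact ((hmemhat bm).1 this).2 hbmr
  have hCcard : (seCorners θ).card = (seCorners θhat).card + 1 := by
    rw [hkey, Finset.card_insert_of_notMem hbmnot]
  have hChat1 : 1 ≤ (seCorners θhat).card :=
    (strip_corners_nonempty θhat hhs' hhatne).card_pos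
  rw [Acoef_strip θ hhs hne p, Acoef_strip θhat hhs' hhatne (p - a),
    Acoef_strip θhat hhs' hhatne (p - a + 1), hCcard,
    Fval_pascal _ hChat1]
  have h1 : (θ.card : ℤ) - p = (θhat.card : ℤ) - (p - a) := by omega
  have h2 : (θhat.card : ℤ) - (p - a) - 1 = (θhat.card : ℤ) - (p - a + 1) := by omega
  rw [h1, h2]
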